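/- Let d ≥ 2, let F : ℝ^{d−1} → ℝ be Lipschitz, and let K ⊂ ℝ^{d−1} be compact. Then there exists a constant C such that for every continuously differentiable compactly supported function u : ℝ^d → ℂ, ∫_K |u(x', F(x'))|² dx' ≤ C ‖u‖_{L²(ℝ^d)} ( ‖u‖²_{L²(ℝ^d)} + ‖∇u‖²_{L²(ℝ^d)} )^{1/2}. (This is the trace inequality ‖u‖²_{L²(Γ)} ≤ C ‖u‖_{L²} ‖u‖_{H¹} used in Section 2 to show that the quadratic form Q_{V,Γ} is bounded below and defines a self-adjoint operator.) -/

import Mathlib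

open MeasureTheory Metric

noncomputable section

/-- Embed `(x', s) ∈ ℝ^{n} × ℝ` as a point of `ℝ^{n+1}`. -/
def snocE {n : ℕ} (x : EuclideanSpace ℝ (Fin n)) (s : ℝ) : EuclideanSpace ℝ (Fin (n + 1)) :=
  (EuclideanSpace.equiv (Fin (n + 1)) ℝ).symm
    (Fin.snoc (EuclideanSpace.equiv (Fin n) ℝ x) s)

namespace TraceAux

variable {n : ℕ}

lemma snocE_eq (x : EuclideanSpace ℝ (Fin n)) (s : ℝ) :
    snocE x s = snocE x 0 + s • snocE 0 1 := by
  ext i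
  simp only [snocE, EuclideanSpace.equiv]
  refine Fin.lastCases ?_ (fun j => ?_) i <;>
    simp [Fin.snoc, PiLp.add_apply, PiLp.smul_apply, smul_eq_mul]

lemma norm_snocE_dir : ‖snocE (0 : EuclideanSpace ℝ (Fin n)) 1‖ = 1 := by
  have : snocE (0 : EuclideanSpace ℝ (Fin n)) 1 = EuclideanSpace.single (Fin.last n) 1 := by
    ext i
    refine Fin.lastCases ?_ (fun j => ?_) i
    · simp [snocE, Fin.snoc, EuclideanSpace.single]
    · simp [snocE, Fin.snoc, EuclideanSpace.single,
        Pi.single_eq_of_ne (Fin.castSucc_lt_last j).ne]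
  rw [this]
  simp [EuclideanSpace.norm_single]

lemma abs_apply_le_norm (y : EuclideanSpace ℝ (Fin (n+1))) (i : Fin (n+1)) : |y i| ≤ ‖y‖ := by
  rw [EuclideanSpace.norm_eq, ← Real.sqrt_sq_eq_abs]
  apply Real.sqrt_le_sqrt
  have : y i ^ 2 = ‖y i‖ ^ 2 := by simp [sq_abs, Real.norm_eq_abs]
  rw [this]
  exact Finset.single_le_sum (f := fun j => ‖y j‖^2) (fun j _ => by positivity) (Finset.mem_univ i)

lemma abs_snocE_last_le (x : EuclideanSpace ℝ (Fin n)) (s : ℝ) : |s| ≤ ‖snocE x s‖ := by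
  have h : snocE x s (Fin.last n) = s := by simp [snocE, Fin.snoc]
  calc |s| = |snocE x s (Fin.last n)| := by rw [h]
  _ ≤ ‖snocE x s‖ := abs_apply_le_norm _ _

lemma continuous_snocE : Continuous (fun p : EuclideanSpace ℝ (Fin n) × ℝ => snocE p.1 p.2) := by
  apply ((EuclideanSpace.equiv (Fin (n+1)) ℝ).symm : (Fin (n+1) → ℝ) ≃L[ℝ] _).continuous.comp
  apply continuous_pi
  intro i
  refine Fin.lastCases ?_ (fun j => ?_) i
  · simpa [Fin.snoc] using continuous_snd
  · simp only [Fin.snoc_castSucc]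
    exact (continuous_apply (A := fun _ : Fin n => ℝ) j).comp
      ((EuclideanSpace.equiv (Fin n) ℝ : _ ≃L[ℝ] (Fin n → ℝ)).continuous.comp continuous_fst)

lemma hasDerivAt_snocE (x : EuclideanSpace ℝ (Fin n)) (t : ℝ) :
    HasDerivAt (fun s => snocE x s) (snocE 0 1) t := by
  have : (fun s => snocE x s) = fun s => snocE x 0 + s • snocE (0:EuclideanSpace ℝ (Fin n)) 1 :=
    funext fun s => snocE_eq x s
  rw [this]
  simpa using ((hasDerivAt_id t).smul_const (snocE (0:EuclideanSpace ℝ (Fin n)) 1)).const_add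
    (snocE x 0)

/-- The measurable equivalence `ℝ^n × ℝ ≃ᵐ ℝ^{n+1}` realizing `snocE`. -/
def PhiE (n : ℕ) : (EuclideanSpace ℝ (Fin n) × ℝ) ≃ᵐ EuclideanSpace ℝ (Fin (n+1)) :=
  (((MeasurableEquiv.toLp 2 (Fin n → ℝ)).symm).prodCongr (MeasurableEquiv.refl ℝ)).trans
    ((MeasurableEquiv.prodComm).trans
      (((MeasurableEquiv.piFinSuccAbove (fun _ : Fin (n+1) => ℝ) (Fin.last n)).symm).trans
        ((MeasurableEquiv.toLp 2 (Fin (n+1) → ℝ)).symm).symm))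

lemma PhiE_apply (x : EuclideanSpace ℝ (Fin n)) (s : ℝ) : PhiE n (x, s) = snocE x s := by
  simp only [PhiE, MeasurableEquiv.trans_apply, MeasurableEquiv.prodCongr,
    MeasurableEquiv.prodComm, MeasurableEquiv.coe_mk, Equiv.prodCongr_apply, Equiv.prodComm_apply,
    MeasurableEquiv.piFinSuccAbove_symm_apply]
  simp [snocE, Fin.insertNthEquiv, Fin.insertNth_last']
  rfl

lemma PhiE_mp : MeasurePreserving (PhiE n) (volume.prod volume) volume := by
  have e1 := (EuclideanSpace.volume_preserving_symm_measurableEquiv_toLp (Fin (n+1))).symm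
  have e2 := (volume_preserving_piFinSuccAbove (fun _ : Fin (n+1) => ℝ) (Fin.last n)).symm
  have e3 := (EuclideanSpace.volume_preserving_symm_measurableEquiv_toLp (Fin n)).prod
      (MeasurePreserving.id (volume : Measure ℝ))
  have esw : MeasurePreserving (Prod.swap : (Fin n → ℝ) × ℝ → ℝ × (Fin n → ℝ))
      (volume.prod volume) (volume.prod volume) := Measure.measurePreserving_swap
  exact e1.comp (e2.comp (esw.comp e3))

lemma slice_bound (u : EuclideanSpace ℝ (Fin (n+1)) → ℂ) (hu : ContDiff ℝ 1 u)
    (hs : HasCompactSupport u) (x' : EuclideanSpace ℝ (Fin n)) (a : ℝ) :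
    ‖u (snocE x' a)‖ ^ 2 ≤
      ∫ t : ℝ, 2 * (‖u (snocE x' t)‖ * ‖fderiv ℝ u (snocE x' t)‖) := by
  set e : EuclideanSpace ℝ (Fin (n+1)) := snocE 0 1 with he
  set γ : ℝ → EuclideanSpace ℝ (Fin (n+1)) := fun t => snocE x' t with hγdef
  set w : ℝ → ℂ := fun t => u (γ t) with hwdef
  set v : ℝ → ℂ := fun t => fderiv ℝ u (γ t) e with hvdef
  set B : ℝ → ℝ := fun t => 2 * (‖u (γ t)‖ * ‖fderiv ℝ u (γ t)‖) with hBdef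
  have hud : Differentiable ℝ u := hu.differentiable one_ne_zero
  have hw : ∀ t, HasDerivAt w (v t) t := fun t =>
    (hud (γ t)).hasFDerivAt.comp_hasDerivAt t (hasDerivAt_snocE x' t)
  set D : ℝ → ℝ := fun t => @inner ℝ ℂ _ (w t) (v t) + @inner ℝ ℂ _ (v t) (w t) with hDdef
  have hh : ∀ t, HasDerivAt (fun s => @inner ℝ ℂ _ (w s) (w s)) (D t) t := fun t =>
    (hw t).inner ℝ (hw t)
  have hγc : Continuous γ := continuous_snocE.comp (Continuous.prodMk_right x')
  have hfc : Continuous (fderiv ℝ u) := hu.continuous_fderiv one_ne_zero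
  have hvc : Continuous v := ((hfc.comp hγc).clm_apply continuous_const)
  have hwc : Continuous w := (hud.continuous).comp hγc
  have hDc : Continuous D := ((hwc.inner hvc).add (hvc.inner hwc))
  have hBc : Continuous B := by
    exact continuous_const.mul ((hwc.norm).mul ((hfc.comp hγc).norm))
  have hDB : ∀ t, D t ≤ B t := by
    intro t
    have h1 : |(@inner ℝ ℂ _ (w t) (v t))| ≤ ‖w t‖ * ‖v t‖ := abs_real_inner_le_norm _ _
    have h2 : |(@inner ℝ ℂ _ (v t) (w t))| ≤ ‖v t‖ * ‖w t‖ := abs_real_inner_le_norm _ _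
    have hv : ‖v t‖ ≤ ‖fderiv ℝ u (γ t)‖ := by
      calc ‖v t‖ ≤ ‖fderiv ℝ u (γ t)‖ * ‖e‖ := (fderiv ℝ u (γ t)).le_opNorm e
      _ = ‖fderiv ℝ u (γ t)‖ := by rw [he, norm_snocE_dir, mul_one]
    have := add_le_add (le_trans (le_abs_self _) h1) (le_trans (le_abs_self _) h2)
    calc D t ≤ ‖w t‖ * ‖v t‖ + ‖v t‖ * ‖w t‖ := this
    _ = 2 * (‖w t‖ * ‖v t‖) := by ring
    _ ≤ 2 * (‖w t‖ * ‖fderiv ℝ u (γ t)‖) := by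
        have := mul_le_mul_of_nonneg_left hv (norm_nonneg (w t))
        linarith
  obtain ⟨R, hRpos, hR⟩ := hs.isBounded.subset_closedBall_lt 0 0
  have hzero : ∀ t : ℝ, R < |t| → u (γ t) = 0 ∧ fderiv ℝ u (γ t) = 0 := by
    intro t ht
    have hnotin : γ t ∉ tsupport u := by
      intro hmem
      have := hR hmem
      simp only [mem_closedBall, dist_zero_right] at this
      exact absurd (le_trans (abs_snocE_last_le x' t) this) (not_le.mpr ht)
    refine ⟨image_eq_zero_of_notMem_tsupport hnotin, ?_⟩
    by_contra h
    exact hnotin (support_fderiv_subset ℝ (Function.mem_support.mpr h))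
  have hBsupp : HasCompactSupport B := by
    have hsub : Function.support B ⊆ Set.Icc (-(R+1)) (R+1) := by
      intro t ht
      by_contra hc
      simp only [Set.mem_Icc, not_and_or, not_le] at hc
      have habs : R < |t| := by
        rcases hc with hc | hc
        · exact lt_of_lt_of_le (by linarith) (neg_le_abs t)
        · exact lt_of_lt_of_le (by linarith) (le_abs_self t)
      have := hzero t habs
      apply ht
      simp [hBdef, this.1]
    exact HasCompactSupport.intro isCompact_Icc fun t ht =>
      by_contra fun h => ht (hsub (Function.mem_support.mpr h))
  have hBint : Integrable B := hBc.integrable_of_hasCompactSupport hBsupp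
  set N : ℝ := -(R + |a| + 1) with hN
  have hNa : N < a := by
    have := abs_nonneg a
    have := neg_abs_le a
    rw [hN]; linarith
  have hwN : w N = 0 := by
    apply (hzero N ?_).1
    rw [hN, abs_neg, abs_of_pos (by have := abs_nonneg a; linarith)]
    have := abs_nonneg a; linarith
  have hFTC : ∫ t in N..a, D t = @inner ℝ ℂ _ (w a) (w a) - @inner ℝ ℂ _ (w N) (w N) :=
    intervalIntegral.integral_eq_sub_of_hasDerivAt (fun t _ => hh t) (hDc.intervalIntegrable N a)
  have hinner0 : @inner ℝ ℂ _ (w N) (w N) = 0 := by rw [hwN]; simp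
  calc ‖u (snocE x' a)‖ ^ 2 = @inner ℝ ℂ _ (w a) (w a) := (real_inner_self_eq_norm_sq _).symm
  _ = ∫ t in N..a, D t := by rw [hFTC, hinner0, sub_zero]
  _ ≤ ∫ t in N..a, B t :=
      intervalIntegral.integral_mono_on hNa.le (hDc.intervalIntegrable N a)
        (hBc.intervalIntegrable N a) (fun t _ => hDB t)
  _ = ∫ t in Set.Ioc N a, B t := intervalIntegral.integral_of_le hNa.le
  _ ≤ ∫ t, B t := setIntegral_le_integral hBint (ae_of_all _ fun t => by positivity)

end TraceAux

open TraceAux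

/-- trace inequality `‖u‖²_{L²(Γ)} ≤ C ‖u‖_{L²} ‖u‖_{H¹}` of Section 2.
For `F : ℝ^{d−1} → ℝ` Lipschitz and `K` compact there is `C` such that for every `C¹`
compactly supported `u : ℝ^d → ℂ`,
`∫_K |u(x',F(x'))|² dx' ≤ C ‖u‖_{L²} (‖u‖²_{L²} + ‖∇u‖²_{L²})^{1/2}`. -/
theorem trace_inequality_graph
    (n : ℕ) (hn : 1 ≤ n)
    (F : EuclideanSpace ℝ (Fin n) → ℝ) (L : NNReal) (hF : LipschitzWith L F)
    (K : Set (EuclideanSpace ℝ (Fin n))) (hK : IsCompact K) :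
    ∃ C > 0, ∀ u : EuclideanSpace ℝ (Fin (n + 1)) → ℂ,
      ContDiff ℝ 1 u → HasCompactSupport u →
      (∫ x' in K, ‖u (snocE x' (F x'))‖ ^ 2) ≤
        C * Real.sqrt (∫ x : EuclideanSpace ℝ (Fin (n + 1)), ‖u x‖ ^ 2) *
          Real.sqrt ((∫ x : EuclideanSpace ℝ (Fin (n + 1)), ‖u x‖ ^ 2) +
            ∫ x : EuclideanSpace ℝ (Fin (n + 1)), ‖fderiv ℝ u x‖ ^ 2) := by
  refine ⟨2, two_pos, ?_⟩
  intro u hu hs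
  set A : ℝ := ∫ x : EuclideanSpace ℝ (Fin (n + 1)), ‖u x‖ ^ 2 with hA
  set Bd : ℝ := ∫ x : EuclideanSpace ℝ (Fin (n + 1)), ‖fderiv ℝ u x‖ ^ 2 with hBd
  set f : EuclideanSpace ℝ (Fin (n+1)) → ℝ := fun x => 2 * (‖u x‖ * ‖fderiv ℝ u x‖) with hfdef
  have hud : Differentiable ℝ u := hu.differentiable one_ne_zero
  have hfderivc : Continuous (fderiv ℝ u) := hu.continuous_fderiv one_ne_zero
  have hfc : Continuous f := continuous_const.mul ((hud.continuous.norm).mul hfderivc.norm)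
  have hfsupp : HasCompactSupport f := by
    apply HasCompactSupport.intro hs
    intro x hx
    simp [hfdef, image_eq_zero_of_notMem_tsupport hx]
  have hfint : Integrable f := hfc.integrable_of_hasCompactSupport hfsupp
  have hmp : MeasurePreserving (PhiE n) (volume.prod volume) volume := PhiE_mp
  have hfPint : Integrable (fun p => f (PhiE n p)) (volume.prod volume) :=
    (hmp.integrable_comp_emb (PhiE n).measurableEmbedding).2 hfint
  set G : EuclideanSpace ℝ (Fin n) → ℝ := fun x' => ∫ t : ℝ, f (snocE x' t) with hGdef
  have hGfP : (fun x' => ∫ t : ℝ, f (PhiE n (x', t))) = G := by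
    funext x'; simp only [hGdef, PhiE_apply]
  have hGint : Integrable G := by rw [← hGfP]; exact hfPint.integral_prod_left
  have hGnonneg : ∀ x', 0 ≤ G x' := fun x' => integral_nonneg fun t => by positivity
  have hfub : ∫ x', G x' = ∫ x, f x := by
    rw [← hGfP, ← hmp.integral_comp' f]
    exact (integral_prod _ hfPint).symm
  have hLHSc : Continuous fun x' : EuclideanSpace ℝ (Fin n) => ‖u (snocE x' (F x'))‖ ^ 2 := by
    have hc : Continuous fun x' : EuclideanSpace ℝ (Fin n) => snocE x' (F x') :=
      continuous_snocE.comp (continuous_id.prodMk hF.continuous)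
    exact ((hud.continuous.comp hc).norm.pow 2)
  have h1 : (∫ x' in K, ‖u (snocE x' (F x'))‖ ^ 2) ≤ ∫ x' in K, G x' :=
    setIntegral_mono_on (hLHSc.continuousOn.integrableOn_compact hK) hGint.integrableOn
      hK.measurableSet (fun x' _ => slice_bound u hu hs x' (F x'))
  have h2 : ∫ x' in K, G x' ≤ ∫ x', G x' :=
    setIntegral_le_integral hGint (ae_of_all _ hGnonneg)
  have h3 : ∫ x, f x = 2 * ∫ x, ‖u x‖ * ‖fderiv ℝ u x‖ := integral_const_mul 2 _
  -- Cauchy–Schwarz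
  have humem : MemLp (fun x => ‖u x‖) (ENNReal.ofReal 2) volume := by
    rw [show ENNReal.ofReal 2 = 2 by norm_num]
    exact (hud.continuous.norm).memLp_of_hasCompactSupport hs.norm
  have hdmem : MemLp (fun x => ‖fderiv ℝ u x‖) (ENNReal.ofReal 2) volume := by
    rw [show ENNReal.ofReal 2 = 2 by norm_num]
    exact hfderivc.norm.memLp_of_hasCompactSupport (hs.fderiv ℝ).norm
  have hconj : Real.HolderConjugate 2 2 := Real.HolderConjugate.two_two
  have hCS := integral_mul_le_Lp_mul_Lq_of_nonneg hconj
      (ae_of_all _ fun x => norm_nonneg (u x))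
      (ae_of_all _ fun x => norm_nonneg (fderiv ℝ u x)) humem hdmem
  have hrw : ∀ g : EuclideanSpace ℝ (Fin (n+1)) → ℝ,
      (∫ x, g x ^ (2:ℝ)) ^ ((1:ℝ)/2) = Real.sqrt (∫ x, g x ^ 2) := by
    intro g
    rw [Real.sqrt_eq_rpow]
    congr 1
    refine integral_congr_ae (ae_of_all _ fun x => ?_)
    show g x ^ (2:ℝ) = g x ^ (2:ℕ)
    rw [← Real.rpow_natCast (g x) 2]
    norm_num
  rw [hrw (fun x => ‖u x‖), hrw (fun x => ‖fderiv ℝ u x‖)] at hCS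
  have hAnn : 0 ≤ A := integral_nonneg fun x => by positivity
  have hsqB : Real.sqrt Bd ≤ Real.sqrt (A + Bd) :=
    Real.sqrt_le_sqrt (by linarith)
  have hfinal : ∫ x, f x ≤ 2 * Real.sqrt A * Real.sqrt (A + Bd) := by
    rw [h3]
    have h4 : ∫ x, ‖u x‖ * ‖fderiv ℝ u x‖ ≤ Real.sqrt A * Real.sqrt (A + Bd) := by
      refine le_trans hCS ?_
      exact mul_le_mul_of_nonneg_left hsqB (Real.sqrt_nonneg A)
    nlinarith [Real.sqrt_nonneg A, Real.sqrt_nonneg (A + Bd)]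
  calc (∫ x' in K, ‖u (snocE x' (F x'))‖ ^ 2) ≤ ∫ x', G x' := le_trans h1 h2
  _ = ∫ x, f x := hfub
  _ ≤ 2 * Real.sqrt A * Real.sqrt (A + Bd) := hfinal

end
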